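/- Let A be a δ-ring which is p-adically separated (i.e., the intersection of the ideals p^n A over all n ≥ 0 is zero). If the ideal pA is a prime ideal of A, then A is p-torsion-free. -/

import Mathlib

open scoped BigOperators

/-- A δ-structure on a commutative `ℤ_(p)`-algebra `A`: a map `δ : A → A` with
`δ(0) = δ(1) = 0`, `δ(a+b) = δ a + δ b + (a^p + b^p - (a+b)^p)/p` (expressed via binomial
coefficients divided by the prime `p`), and
`δ(ab) = a^p δ b + b^p δ a + p δ a δ b`.  The field `isUnit_of_not_dvd` expresses that `A`
is a `ℤ_(p)`-algebra. -/
structure DeltaStructure (A : Type) [CommRing A] (p : ℕ) : Type where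
  δ : A → A
  delta_zero : δ 0 = 0
  delta_one : δ 1 = 0
  delta_add : ∀ a b : A, δ (a + b) = δ a + δ b -
      ∑ i ∈ Finset.Ioo 0 p, (((p.choose i) / p : ℕ) : A) * a ^ i * b ^ (p - i)
  delta_mul : ∀ a b : A, δ (a * b) =
      a ^ p * δ b + b ^ p * δ a + (p : A) * δ a * δ b
  isUnit_of_not_dvd : ∀ n : ℤ, ¬ ((p : ℤ) ∣ n) → IsUnit ((n : A))

/-- The Frobenius lift `φ(a) = a^p + p·δ(a)` associated to a δ-structure. -/
def DeltaStructure.phi {A : Type} [CommRing A] {p : ℕ} (D : DeltaStructure A p) (a : A) : A :=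
  a ^ p + (p : A) * D.δ a

/-- An `A`-module `M` is derived `f`-complete iff the map `(xₙ) ↦ (xₙ - f·xₙ₊₁)` on `M^ℕ`
is bijective (equivalently, `Hom(A[1/f], M) = Ext¹(A[1/f], M) = 0`). -/
def DerivedFComplete {A : Type} [CommRing A] (f : A) (M : Type) [AddCommGroup M]
    [Module A M] : Prop :=
  Function.Bijective (fun x : ℕ → M => fun n => x n - f • x (n + 1))

section Aux

variable (p : ℕ) [Fact (Nat.Prime p)]

/-- The integer `(k - k^p)/p`. -/
def cval (k : ℕ) : ℤ := ((k : ℤ) - (k : ℤ) ^ p) / p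

lemma cval_dvd (k : ℕ) : (p : ℤ) ∣ ((k : ℤ) - (k : ℤ) ^ p) := by
  have : ((((k : ℤ) - (k : ℤ) ^ p) : ℤ) : ZMod p) = 0 := by
    push_cast
    rw [ZMod.pow_card]
    ring
  exact (ZMod.intCast_zmod_eq_zero_iff_dvd _ p).1 this

lemma cval_spec (k : ℕ) : (p : ℤ) * cval p k = (k : ℤ) - (k : ℤ) ^ p :=
  Int.mul_ediv_cancel' (cval_dvd p k)

lemma cval_succ (k : ℕ) :
    cval p (k + 1) = cval p k -
      ∑ i ∈ Finset.Ioo 0 p, (((p.choose i) / p : ℕ) : ℤ) * (k : ℤ) ^ i := by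
  have hp : Nat.Prime p := Fact.out
  have hp0 : (p : ℤ) ≠ 0 := by exact_mod_cast hp.ne_zero
  apply mul_left_cancel₀ hp0
  rw [cval_spec, mul_sub, cval_spec, Finset.mul_sum]
  have hterm : ∀ i ∈ Finset.Ioo 0 p,
      (p : ℤ) * ((((p.choose i) / p : ℕ) : ℤ) * (k : ℤ) ^ i)
        = ((p.choose i : ℕ) : ℤ) * (k : ℤ) ^ i := by
    intro i hi
    simp only [Finset.mem_Ioo] at hi
    have hd : p ∣ p.choose i := hp.dvd_choose_self (by omega) hi.2
    rw [← mul_assoc, ← Nat.cast_mul, Nat.mul_div_cancel' hd]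
  rw [Finset.sum_congr rfl hterm]
  have hexp : ((k : ℤ) + 1) ^ p
      = (k : ℤ) ^ p + 1 + ∑ i ∈ Finset.Ioo 0 p, ((p.choose i : ℕ) : ℤ) * (k : ℤ) ^ i := by
    rw [add_pow]
    have h1 : ∑ i ∈ Finset.range (p + 1), (k : ℤ) ^ i * 1 ^ (p - i) * (p.choose i)
        = ∑ i ∈ Finset.range (p + 1), (k : ℤ) ^ i * (p.choose i) := by
      apply Finset.sum_congr rfl; intro i _; ring
    rw [h1, Finset.sum_range_succ, Finset.range_eq_Ico,
      Finset.sum_eq_sum_Ico_succ_bot hp.pos, Finset.Ico_add_one_left_eq_Ioo]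
    have h2 : ∑ i ∈ Finset.Ioo 0 p, (k : ℤ) ^ i * ((p.choose i : ℕ) : ℤ)
        = ∑ i ∈ Finset.Ioo 0 p, ((p.choose i : ℕ) : ℤ) * (k : ℤ) ^ i :=
      Finset.sum_congr rfl fun i _ => mul_comm _ _
    rw [h2]
    simp [Nat.choose_self]
    ring
  push_cast
  rw [hexp]
  ring

lemma cval_prime_pow (n : ℕ) :
    cval p (p ^ (n + 1)) = (p : ℤ) ^ n * (1 - (p : ℤ) ^ ((n + 1) * (p - 1))) := by
  have hp : Nat.Prime p := Fact.out
  have hp0 : (p : ℤ) ≠ 0 := by exact_mod_cast hp.ne_zero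
  have h0 : (n + 1) * (p - 1) + (n + 1) = (n + 1) * p := by
    obtain ⟨q, rfl⟩ := Nat.exists_eq_succ_of_ne_zero hp.ne_zero
    rw [Nat.succ_sub_one, Nat.succ_eq_add_one]
    ring
  have h1 : (n + 1) * p = n + 1 + (n + 1) * (p - 1) := by omega
  apply mul_left_cancel₀ hp0
  rw [cval_spec]
  push_cast
  rw [← pow_mul, h1, pow_add]
  ring

variable {A : Type} [CommRing A]

lemma delta_natCast (D : DeltaStructure A p) (k : ℕ) :
    D.δ ((k : ℕ) : A) = ((cval p k : ℤ) : A) := by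
  have hp : Nat.Prime p := Fact.out
  induction k with
  | zero =>
    simp [cval, zero_pow hp.ne_zero, D.delta_zero]
  | succ k ih =>
    have hc : ((k + 1 : ℕ) : A) = (k : A) + 1 := by push_cast; ring
    rw [hc, D.delta_add, D.delta_one, ih, cval_succ]
    simp only [Int.cast_sub, Int.cast_sum, Int.cast_mul, Int.cast_pow, Int.cast_natCast,
      one_pow, mul_one, add_zero]

lemma delta_key (D : DeltaStructure A p) (n : ℕ) (b : A)
    (hb : (p : A) ^ (n + 1) * b = 0) :
    ∃ w : A, (p : A) ^ n *
      ((1 - (p : A) ^ ((n + 1) * (p - 1))) * b ^ p + (p : A) * w) = 0 := by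
  have hp : Nat.Prime p := Fact.out
  have hδ : ((p : A) ^ (n + 1)) ^ p * D.δ b
      + b ^ p * D.δ ((p : A) ^ (n + 1))
      + (p : A) * D.δ ((p : A) ^ (n + 1)) * D.δ b = 0 := by
    rw [← D.delta_mul, hb, D.delta_zero]
  have hδp : D.δ ((p : A) ^ (n + 1))
      = (p : A) ^ n * (1 - (p : A) ^ ((n + 1) * (p - 1))) := by
    rw [← Nat.cast_pow, delta_natCast p D, cval_prime_pow p n]
    push_cast
    ring
  rw [hδp] at hδ
  have h0 : (n + 1) * (p - 1) + (n + 1) = (n + 1) * p := by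
    obtain ⟨q, rfl⟩ := Nat.exists_eq_succ_of_ne_zero hp.ne_zero
    rw [Nat.succ_sub_one, Nat.succ_eq_add_one]
    ring
  have h2 : ((p : A) ^ (n + 1)) ^ p
      = (p : A) ^ n * ((p : A) * (p : A) ^ ((n + 1) * (p - 1))) := by
    rw [← pow_mul, show (n + 1) * p = n + (1 + (n + 1) * (p - 1)) by omega,
      pow_add, pow_add, pow_one]
  refine ⟨(p : A) ^ ((n + 1) * (p - 1)) * D.δ b
      + (1 - (p : A) ^ ((n + 1) * (p - 1))) * D.δ b, ?_⟩
  have heq : (p : A) ^ n *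
      ((1 - (p : A) ^ ((n + 1) * (p - 1))) * b ^ p + (p : A) *
        ((p : A) ^ ((n + 1) * (p - 1)) * D.δ b
          + (1 - (p : A) ^ ((n + 1) * (p - 1))) * D.δ b))
      = ((p : A) ^ (n + 1)) ^ p * D.δ b
        + b ^ p * ((p : A) ^ n * (1 - (p : A) ^ ((n + 1) * (p - 1))))
        + (p : A) * ((p : A) ^ n * (1 - (p : A) ^ ((n + 1) * (p - 1)))) * D.δ b := by
    rw [h2]; ring
  exact heq.trans hδ

lemma isUnit_one_sub_pow (D : DeltaStructure A p) (e : ℕ) (he : e ≠ 0) :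
    IsUnit ((1 : A) - (p : A) ^ e) := by
  have hp : Nat.Prime p := Fact.out
  have hcast : (((1 - (p : ℤ) ^ e) : ℤ) : A) = 1 - (p : A) ^ e := by push_cast; ring
  rw [← hcast]
  apply D.isUnit_of_not_dvd
  intro hdvd
  have hpe : (p : ℤ) ∣ (p : ℤ) ^ e := dvd_pow_self _ he
  have h1 : (p : ℤ) ∣ 1 := by
    have : (1 : ℤ) = (1 - (p : ℤ) ^ e) + (p : ℤ) ^ e := by ring
    rw [this]; exact dvd_add hdvd hpe
  have := Int.le_of_dvd one_pos h1
  have := hp.two_le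
  omega

lemma torsion_mem_span (D : DeltaStructure A p)
    (hprime : (Ideal.span {(p : A)}).IsPrime) :
    ∀ n : ℕ, ∀ b : A, (p : A) ^ (n + 1) * b = 0 → b ∈ Ideal.span {(p : A)} := by
  have hp : Nat.Prime p := Fact.out
  have hstep : ∀ (m : ℕ) (b : A),
      (1 - (p : A) ^ ((m + 1) * (p - 1))) * b ^ p ∈ Ideal.span {(p : A)} →
      b ∈ Ideal.span {(p : A)} := by
    intro m b hmem
    have he : (m + 1) * (p - 1) ≠ 0 := by
      have := hp.two_le
      have : p - 1 ≠ 0 := by omega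
      positivity
    obtain ⟨v, hv⟩ := isUnit_one_sub_pow p D ((m + 1) * (p - 1)) he
    have hbp : b ^ p ∈ Ideal.span {(p : A)} := by
      have : b ^ p = (↑v⁻¹ : A) * ((1 - (p : A) ^ ((m + 1) * (p - 1))) * b ^ p) := by
        rw [← hv, ← mul_assoc, Units.inv_mul, one_mul]
      rw [this]
      exact Ideal.mul_mem_left _ _ hmem
    exact hprime.mem_of_pow_mem p hbp
  intro n
  induction n with
  | zero =>
    intro b hb
    obtain ⟨w, hw⟩ := delta_key p D 0 b hb
    rw [pow_zero, one_mul] at hw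
    apply hstep 0 b
    have : (1 - (p : A) ^ ((0 + 1) * (p - 1))) * b ^ p = -((p : A) * w) := by
      linear_combination hw
    rw [this]
    exact neg_mem (Ideal.mul_mem_right _ _
      (Ideal.subset_span (Set.mem_singleton _)))
  | succ n ih =>
    intro b hb
    obtain ⟨w, hw⟩ := delta_key p D (n + 1) b hb
    have hd := ih _ hw
    apply hstep (n + 1) b
    have : (1 - (p : A) ^ ((n + 1 + 1) * (p - 1))) * b ^ p
        = ((1 - (p : A) ^ ((n + 1 + 1) * (p - 1))) * b ^ p + (p : A) * w)
          - (p : A) * w := by ring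
    rw [this]
    exact sub_mem hd (Ideal.mul_mem_right _ _
      (Ideal.subset_span (Set.mem_singleton _)))

end Aux

theorem statement2 (p : ℕ) [Fact (Nat.Prime p)] {A : Type} [CommRing A]
    (D : DeltaStructure A p)
    (hsep : ∀ a : A, (∀ n : ℕ, a ∈ Ideal.span {(p : A) ^ n}) → a = 0)
    (hprime : (Ideal.span {(p : A)}).IsPrime) :
    ∀ a : A, (p : A) * a = 0 → a = 0 := by
  intro a ha
  apply hsep
  intro n
  induction n with
  | zero =>
    rw [pow_zero]
    exact Ideal.mem_span_singleton.2 (one_dvd a)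
  | succ n ih =>
    obtain ⟨b, hb⟩ := Ideal.mem_span_singleton.1 ih
    have hb0 : (p : A) ^ (n + 1) * b = 0 := by
      have : (p : A) ^ (n + 1) * b = (p : A) * a := by rw [hb]; ring
      rw [this, ha]
    obtain ⟨c, hc⟩ := Ideal.mem_span_singleton.1 (torsion_mem_span p D hprime n b hb0)
    refine Ideal.mem_span_singleton.2 ⟨c, ?_⟩
    rw [hb, hc]
    ring
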